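/- arXiv:1411.1488 — 2 statements merged into one kernel-verified Lean document; each statement's English description precedes it below -/
import Mathlib

section
/- Let R be a subspace of ℝ^k of dimension t' with a basis {r_1,…,r_{t'}} such that each ‖r_i‖_∞ ≤ Δ/√k and ‖r_i‖₂ = 1. Then for any vector p ∈ ℝ^k, the projection onto the orthogonal complement of R satisfies ‖P_{⊥R} p‖_∞ ≤ ‖p‖_∞ + ‖p‖₂ · Δ · √(t')/√k. -/
/-- ℓ∞ bound for projection orthogonal to a subspace with an orthonormal basis
of entrywise small vectors: ‖P_{⊥R} p‖_∞ ≤ ‖p‖_∞ + ‖p‖·Δ·√t'/√k. -/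
theorem proj_linf_bound (k t' : ℕ) (Δ : ℝ)
    (r : Fin t' → EuclideanSpace ℝ (Fin k)) (horth : Orthonormal ℝ r)
    (hunit : ∀ i, ‖r i‖ = 1)
    (hinf : ∀ (i : Fin t') (j : Fin k), |r i j| ≤ Δ / Real.sqrt k)
    (p : EuclideanSpace ℝ (Fin k)) :
    ∀ j : Fin k,
      |(p - ∑ i, (inner ℝ (r i) p : ℝ) • r i) j|
        ≤ (⨆ l, |p l|) + ‖p‖ * Δ * Real.sqrt t' / Real.sqrt k := by
  intro j
  set c : Fin t' → ℝ := fun i => (inner ℝ (r i) p : ℝ) with hc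
  have hq : (∑ i, c i • r i) j = ∑ i, c i * r i j :=
    by rw [WithLp.ofLp_sum, Finset.sum_apply]; simp [PiLp.smul_apply]
  have happ : (p - ∑ i, c i • r i) j = p j - ∑ i, c i * r i j := by
    rw [← hq]; rfl
  have h1 : |p j| ≤ ⨆ l, |p l| :=
    le_ciSup (f := fun l => |p l|) (Set.Finite.bddAbove (Set.finite_range _)) j
  -- Bessel
  have hbessel : ∑ i, c i ^ 2 ≤ ‖p‖ ^ 2 := by
    have := horth.sum_inner_products_le (s := Finset.univ) p
    simpa [hc, Real.norm_eq_abs, sq_abs] using this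
  -- Cauchy-Schwarz
  have hcs : ∑ i, |c i| ≤ Real.sqrt t' * ‖p‖ := by
    have h := sq_sum_le_card_mul_sum_sq (s := (Finset.univ : Finset (Fin t')))
      (f := fun i => |c i|)
    simp only [Finset.card_univ, Fintype.card_fin, sq_abs] at h
    have h2 : (∑ i, |c i|) ^ 2 ≤ (t' : ℝ) * ‖p‖ ^ 2 :=
      h.trans (by
        have : (0:ℝ) ≤ (t':ℝ) := Nat.cast_nonneg _
        exact mul_le_mul_of_nonneg_left hbessel this)
    have hnn : (0:ℝ) ≤ ∑ i, |c i| := Finset.sum_nonneg fun i _ => abs_nonneg _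
    have := Real.sqrt_le_sqrt h2
    rwa [Real.sqrt_sq hnn, Real.sqrt_mul (Nat.cast_nonneg _),
      Real.sqrt_sq (norm_nonneg _)] at this
  have h2 : |∑ i, c i * r i j| ≤ (Real.sqrt t' * ‖p‖) * (Δ / Real.sqrt k) := by
    rcases Nat.eq_zero_or_pos t' with ht | ht
    · subst ht; simp
    have hΔ : 0 ≤ Δ / Real.sqrt k := (abs_nonneg _).trans (hinf ⟨0, ht⟩ j)
    calc |∑ i, c i * r i j| ≤ ∑ i, |c i * r i j| := Finset.abs_sum_le_sum_abs _ _
      _ ≤ ∑ i, |c i| * (Δ / Real.sqrt k) := by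
          refine Finset.sum_le_sum fun i _ => ?_
          rw [abs_mul]
          exact mul_le_mul_of_nonneg_left (hinf i j) (abs_nonneg _)
      _ = (∑ i, |c i|) * (Δ / Real.sqrt k) := by rw [Finset.sum_mul]
      _ ≤ (Real.sqrt t' * ‖p‖) * (Δ / Real.sqrt k) :=
          mul_le_mul_of_nonneg_right hcs hΔ
  calc |(p - ∑ i, c i • r i) j| = |p j - ∑ i, c i * r i j| := by rw [happ]
    _ ≤ |p j| + |∑ i, c i * r i j| := abs_sub _ _
    _ ≤ (⨆ l, |p l|) + (Real.sqrt t' * ‖p‖) * (Δ / Real.sqrt k) := add_le_add h1 h2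
    _ = (⨆ l, |p l|) + ‖p‖ * Δ * Real.sqrt t' / Real.sqrt k := by ring
end

section
/- Let n^{(i)}, n^{(i₁)}, n^{(i₂)} ∈ ℝ^k be independent Gaussian random vectors each with covariance (1/d)·I (where the indices i, i₁, i₂ are distinct, or any ordering). Then with probability 1 − o(1), |⟨n^{(i)}, n^{(i₁)} * n^{(i₂)}⟩| ≤ O(√k · (log k) / d^{3/2}). -/
open MeasureTheory ProbabilityTheory Filter
open scoped NNReal ENNReal

namespace TripleHadamardAux

open Real Set


variable {v : ℝ≥0}

lemma integral_gaussian_eq (hv : v ≠ 0) (g : ℝ → ℝ) :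
    ∫ x, g x ∂(gaussianReal 0 v) = ∫ x, gaussianPDFReal 0 v x * g x := by
  rw [gaussianReal_of_var_ne_zero _ hv]
  have h : gaussianPDF 0 v = fun x => ((gaussianPDFReal 0 v x).toNNReal : ℝ≥0∞) := rfl
  rw [h, integral_withDensity_eq_integral_smul
    ((measurable_gaussianPDFReal 0 v).real_toNNReal) g]
  congr 1 with x
  rw [NNReal.smul_def, Real.coe_toNNReal _ (gaussianPDFReal_nonneg 0 v x), smul_eq_mul]

lemma integrable_gaussian_iff (hv : v ≠ 0) (g : ℝ → ℝ) :
    Integrable g (gaussianReal 0 v) ↔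
      Integrable (fun x => gaussianPDFReal 0 v x * g x) := by
  rw [gaussianReal_of_var_ne_zero _ hv]
  have h : gaussianPDF 0 v = fun x => ((gaussianPDFReal 0 v x).toNNReal : ℝ≥0∞) := rfl
  rw [h, integrable_withDensity_iff_integrable_smul
    ((measurable_gaussianPDFReal 0 v).real_toNNReal)]
  constructor <;> intro hh <;> refine hh.congr (Filter.Eventually.of_forall fun x => ?_) <;>
    simp only [NNReal.smul_def, Real.coe_toNNReal _ (gaussianPDFReal_nonneg 0 v x), smul_eq_mul]

lemma v_pos (hv : v ≠ 0) : (0:ℝ) < v := NNReal.coe_pos.mpr (pos_iff_ne_zero.mpr hv)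

lemma rpow_two' (t : ℝ) : t ^ (2:ℝ) = t * t := by
  rw [show (2:ℝ) = ((2:ℕ):ℝ) by norm_num, Real.rpow_natCast]; ring

lemma pdf_mul_eq (g : ℝ → ℝ) (x : ℝ) :
    gaussianPDFReal 0 v x * g x
      = (Real.sqrt (2 * π * v))⁻¹ * (g x * Real.exp (-(2 * (v:ℝ))⁻¹ * x ^ 2)) := by
  unfold gaussianPDFReal
  rw [sub_zero]
  ring_nf

lemma integrable_id_gaussian (hv : v ≠ 0) :
    Integrable (fun x : ℝ => x) (gaussianReal 0 v) := by
  rw [integrable_gaussian_iff hv]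
  have hb : 0 < (2 * (v:ℝ))⁻¹ := by have := v_pos hv; positivity
  have h2 : (fun x : ℝ => gaussianPDFReal 0 v x * x)
      = fun x => (Real.sqrt (2 * π * v))⁻¹ * (x * Real.exp (-(2 * (v:ℝ))⁻¹ * x ^ 2)) := by
    funext x; exact pdf_mul_eq (fun t => t) x
  rw [h2]
  exact (integrable_mul_exp_neg_mul_sq hb).const_mul _

lemma integrable_sq_gaussian (hv : v ≠ 0) :
    Integrable (fun x : ℝ => x * x) (gaussianReal 0 v) := by
  rw [integrable_gaussian_iff hv]
  have hb : 0 < (2 * (v:ℝ))⁻¹ := by have := v_pos hv; positivity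
  have h2 : (fun x : ℝ => gaussianPDFReal 0 v x * (x * x))
      = fun x => (Real.sqrt (2 * π * v))⁻¹ *
          (x ^ (2:ℝ) * Real.exp (-(2 * (v:ℝ))⁻¹ * x ^ 2)) := by
    funext x
    rw [pdf_mul_eq (fun t => t * t) x, rpow_two']
  rw [h2]
  exact (integrable_rpow_mul_exp_neg_mul_sq hb (by norm_num)).const_mul _

lemma integral_id_gaussian (hv : v ≠ 0) :
    ∫ x, x ∂(gaussianReal 0 v) = 0 := by
  have hmap : (gaussianReal 0 v).map (fun x => (-1:ℝ) * x) = gaussianReal 0 v := by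
    have := gaussianReal_map_const_mul (μ := 0) (v := v) (-1)
    simpa using this
  have h1 : ∫ x, x ∂(gaussianReal 0 v)
      = ∫ x, (-1:ℝ) * x ∂(gaussianReal 0 v) := by
    conv_lhs => rw [← hmap]
    exact integral_map (measurable_const_mul _).aemeasurable aestronglyMeasurable_id
  have h2 : ∫ x, (-1:ℝ) * x ∂(gaussianReal 0 v) = - ∫ x, x ∂(gaussianReal 0 v) := by
    rw [integral_const_mul]; ring
  linarith [h1, h2]

lemma integral_sq_gaussian (hv : v ≠ 0) :
    ∫ x, x * x ∂(gaussianReal 0 v) = (v:ℝ) := by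
  have hvp := v_pos hv
  have hb : 0 < (2 * (v:ℝ))⁻¹ := by positivity
  set f : ℝ → ℝ := fun t => t ^ (2:ℝ) * Real.exp (-(2 * (v:ℝ))⁻¹ * t ^ 2) with hf
  rw [integral_gaussian_eq hv]
  have h2 : (fun x : ℝ => gaussianPDFReal 0 v x * (x * x))
      = fun x => (Real.sqrt (2 * π * v))⁻¹ * f |x| := by
    funext x
    rw [pdf_mul_eq (fun t => t * t) x, hf]
    simp only
    rw [rpow_two', abs_mul_abs_self, sq_abs]
  rw [h2, integral_const_mul, integral_comp_abs (f := f)]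
  have h3 : ∫ x in Ioi (0:ℝ), f x
      = ((2 * (v:ℝ))⁻¹) ^ (-((2:ℝ) + 1) / 2) * (1 / 2) * Real.Gamma (((2:ℝ) + 1) / 2) := by
    rw [← integral_rpow_mul_exp_neg_mul_rpow (by norm_num) (by norm_num : (-1:ℝ) < 2) hb]
    refine setIntegral_congr_fun measurableSet_Ioi (fun x _ => ?_)
    rw [hf]; simp only
    rw [rpow_two', ← pow_two x]
  rw [h3]
  have hG : Real.Gamma (((2:ℝ) + 1) / 2) = (1/2) * Real.sqrt π := by
    rw [show ((2:ℝ) + 1)/2 = 1/2 + 1 by norm_num, Real.Gamma_add_one (by norm_num),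
      Real.Gamma_one_half_eq]
  have hrp : ((2 * (v:ℝ))⁻¹) ^ (-((2:ℝ) + 1) / 2)
      = (2 * (v:ℝ)) * Real.sqrt (2 * (v:ℝ)) := by
    rw [Real.inv_rpow (by positivity), neg_div, Real.rpow_neg (by positivity), inv_inv,
      show ((2:ℝ)+1)/2 = 1 + 1/2 by norm_num,
      Real.rpow_add (by positivity), Real.rpow_one, ← Real.sqrt_eq_rpow]
  rw [hG, hrp]
  have hsq : Real.sqrt (2 * π * (v:ℝ)) = Real.sqrt π * Real.sqrt (2 * (v:ℝ)) := by
    rw [← Real.sqrt_mul (le_of_lt pi_pos)]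
    ring_nf
  rw [hsq]
  have hπ : Real.sqrt π ≠ 0 := ne_of_gt (Real.sqrt_pos.mpr pi_pos)
  have h2v : Real.sqrt (2 * (v:ℝ)) ≠ 0 := ne_of_gt (Real.sqrt_pos.mpr (by positivity))
  field_simp



lemma integral_pi_eval_mul {k : ℕ} (hv : v ≠ 0) (j j' : Fin k) :
    ∫ x : Fin k → ℝ, x j * x j' ∂(Measure.pi fun _ : Fin k => gaussianReal 0 v)
      = if j = j' then (v:ℝ) else 0 := by
  classical
  letI : MeasureSpace ℝ := ⟨gaussianReal 0 v⟩
  haveI : SigmaFinite (volume : Measure ℝ) := inferInstanceAs (SigmaFinite (gaussianReal 0 v))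
  haveI : IsProbabilityMeasure (volume : Measure ℝ) :=
    inferInstanceAs (IsProbabilityMeasure (gaussianReal 0 v))
  set g : Fin k → ℝ → ℝ := fun i t => (if i = j then t else 1) * (if i = j' then t else 1)
    with hg
  have hx : (fun x : Fin k → ℝ => x j * x j') = fun x => ∏ i, g i (x i) := by
    funext x
    rw [hg]
    simp only
    rw [Finset.prod_mul_distrib, Finset.prod_ite_eq', Finset.prod_ite_eq']
    simp
  have hmain : ∫ x : Fin k → ℝ, x j * x j' ∂(Measure.pi fun _ : Fin k => gaussianReal 0 v)
      = ∏ i, ∫ t, g i t ∂(gaussianReal 0 v) := by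
    rw [hx]
    exact integral_fintype_prod_eq_prod g
  rw [hmain]
  have hI : ∀ i, (∫ t, g i t ∂(gaussianReal 0 v))
      = if i = j then (if i = j' then (v:ℝ) else 0) else (if i = j' then 0 else 1) := by
    intro i
    rcases eq_or_ne i j with h1 | h1 <;> rcases eq_or_ne i j' with h2 | h2
    · subst h1; subst h2
      simpa [hg] using integral_sq_gaussian hv
    · subst h1
      simp only [hg, if_pos rfl, if_neg h2, mul_one]
      simpa using integral_id_gaussian hv
    · subst h2
      simp only [hg, if_pos rfl, if_neg h1, one_mul]
      simpa using integral_id_gaussian hv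
    · simp only [hg, if_neg h1, if_neg h2, mul_one]
      simp
  rw [Finset.prod_congr rfl (fun i _ => hI i)]
  by_cases hjj : j = j'
  · subst hjj
    rw [if_pos rfl]
    have h4 : ∀ i : Fin k, (if i = j then (if i = j then (v:ℝ) else 0)
        else (if i = j then 0 else 1)) = if i = j then (v:ℝ) else 1 := by
      intro i; by_cases h : i = j <;> simp [h]
    rw [Finset.prod_congr rfl (fun i _ => h4 i), Finset.prod_ite_eq']
    simp
  · rw [if_neg hjj]
    refine Finset.prod_eq_zero (Finset.mem_univ j) ?_
    simp [hjj]

lemma integrable_pi_eval_mul {k : ℕ} (hv : v ≠ 0) (j j' : Fin k) :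
    Integrable (fun x : Fin k → ℝ => x j * x j')
      (Measure.pi fun _ : Fin k => gaussianReal 0 v) := by
  classical
  letI : MeasureSpace ℝ := ⟨gaussianReal 0 v⟩
  haveI : SigmaFinite (volume : Measure ℝ) := inferInstanceAs (SigmaFinite (gaussianReal 0 v))
  haveI : IsProbabilityMeasure (volume : Measure ℝ) :=
    inferInstanceAs (IsProbabilityMeasure (gaussianReal 0 v))
  set g : Fin k → ℝ → ℝ := fun i t => (if i = j then t else 1) * (if i = j' then t else 1)
    with hg
  have hx : (fun x : Fin k → ℝ => x j * x j') = fun x => ∏ i, g i (x i) := by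
    funext x
    rw [hg]
    simp only
    rw [Finset.prod_mul_distrib, Finset.prod_ite_eq', Finset.prod_ite_eq']
    simp
  rw [hx]
  refine Integrable.fintype_prod (fun i => ?_)
  rcases eq_or_ne i j with h1 | h1 <;> rcases eq_or_ne i j' with h2 | h2
  · subst h1; subst h2
    simpa [hg] using integrable_sq_gaussian hv
  · subst h1
    simpa [hg, if_neg h2] using integrable_id_gaussian hv
  · subst h2
    simpa [hg, if_neg h1] using integrable_id_gaussian hv
  · simpa [hg, if_neg h1, if_neg h2] using integrable_const (1:ℝ)

lemma integral_pi_eval {k : ℕ} (hv : v ≠ 0) (j : Fin k) :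
    ∫ x : Fin k → ℝ, x j ∂(Measure.pi fun _ : Fin k => gaussianReal 0 v) = 0 := by
  classical
  letI : MeasureSpace ℝ := ⟨gaussianReal 0 v⟩
  haveI : SigmaFinite (volume : Measure ℝ) := inferInstanceAs (SigmaFinite (gaussianReal 0 v))
  haveI : IsProbabilityMeasure (volume : Measure ℝ) :=
    inferInstanceAs (IsProbabilityMeasure (gaussianReal 0 v))
  set g : Fin k → ℝ → ℝ := fun i t => if i = j then t else 1 with hg
  have hx : (fun x : Fin k → ℝ => x j) = fun x => ∏ i, g i (x i) := by
    funext x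
    rw [hg]
    simp only
    rw [Finset.prod_ite_eq']
    simp
  rw [hx]
  rw [show (∫ x : Fin k → ℝ, ∏ i, g i (x i) ∂(Measure.pi fun _ : Fin k => gaussianReal 0 v))
      = ∏ i, ∫ t, g i t ∂(gaussianReal 0 v) from integral_fintype_prod_eq_prod g]
  refine Finset.prod_eq_zero (Finset.mem_univ j) ?_
  simp only [hg, if_pos rfl]
  exact integral_id_gaussian hv

lemma integrable_pi_eval {k : ℕ} (hv : v ≠ 0) (j : Fin k) :
    Integrable (fun x : Fin k → ℝ => x j)
      (Measure.pi fun _ : Fin k => gaussianReal 0 v) := by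
  classical
  letI : MeasureSpace ℝ := ⟨gaussianReal 0 v⟩
  haveI : SigmaFinite (volume : Measure ℝ) := inferInstanceAs (SigmaFinite (gaussianReal 0 v))
  haveI : IsProbabilityMeasure (volume : Measure ℝ) :=
    inferInstanceAs (IsProbabilityMeasure (gaussianReal 0 v))
  set g : Fin k → ℝ → ℝ := fun i t => if i = j then t else 1 with hg
  have hx : (fun x : Fin k → ℝ => x j) = fun x => ∏ i, g i (x i) := by
    funext x
    rw [hg]
    simp only
    rw [Finset.prod_ite_eq']
    simp
  rw [hx]
  refine Integrable.fintype_prod (fun i => ?_)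
  rcases eq_or_ne i j with h1 | h1
  · subst h1
    simpa [hg] using integrable_id_gaussian hv
  · simpa [hg, if_neg h1] using integrable_const (1:ℝ)

lemma main_bound (hv : v ≠ 0) {k : ℕ} {c : ℝ} (hc : 0 < c) :
    ((Measure.pi fun _ : Fin k => gaussianReal 0 v).prod
      ((Measure.pi fun _ : Fin k => gaussianReal 0 v).prod
        (Measure.pi fun _ : Fin k => gaussianReal 0 v)))
      {p : (Fin k → ℝ) × (Fin k → ℝ) × (Fin k → ℝ) |
        c ≤ |∑ j, p.1 j * p.2.1 j * p.2.2 j|}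
      ≤ ENNReal.ofReal ((k * ((v:ℝ) * ((v:ℝ) * (v:ℝ)))) / c ^ 2) := by
  classical
  set ν : Measure (Fin k → ℝ) := Measure.pi fun _ : Fin k => gaussianReal 0 v with hν
  set P : Measure ((Fin k → ℝ) × (Fin k → ℝ) × (Fin k → ℝ)) := ν.prod (ν.prod ν) with hP
  set S : (Fin k → ℝ) × (Fin k → ℝ) × (Fin k → ℝ) → ℝ :=
    fun p => ∑ j, p.1 j * p.2.1 j * p.2.2 j with hS
  have hSmeas : Measurable S := by
    rw [hS]
    refine Finset.measurable_sum _ fun j _ => ?_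
    fun_prop
  have hF : ∀ j : Fin k, Integrable
      (fun p : (Fin k → ℝ) × (Fin k → ℝ) × (Fin k → ℝ) =>
        p.1 j * (p.2.1 j * p.2.2 j)) P :=
    fun j => (integrable_pi_eval hv j).mul_prod
      ((integrable_pi_eval hv j).mul_prod (integrable_pi_eval hv j))
  have hSalt : S = fun p => ∑ j, p.1 j * (p.2.1 j * p.2.2 j) := by
    funext p; rw [hS]
    exact Finset.sum_congr rfl fun j _ => by ring
  have hES : ∫ p, S p ∂P = 0 := by
    rw [hSalt, integral_finset_sum _ (fun j _ => hF j)]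
    refine Finset.sum_eq_zero fun j _ => ?_
    have h1 : ∫ p, p.1 j * (p.2.1 j * p.2.2 j) ∂P
        = (∫ x : Fin k → ℝ, x j ∂ν)
          * ∫ q : (Fin k → ℝ) × (Fin k → ℝ), q.1 j * q.2 j ∂(ν.prod ν) :=
      integral_prod_mul (f := fun x : Fin k → ℝ => x j)
        (g := fun q : (Fin k → ℝ) × (Fin k → ℝ) => q.1 j * q.2 j)
    rw [h1, integral_pi_eval hv j, zero_mul]
  have hTint : ∀ j j' : Fin k, Integrable
      (fun p : (Fin k → ℝ) × (Fin k → ℝ) × (Fin k → ℝ) =>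
        (p.1 j * p.1 j') * ((p.2.1 j * p.2.1 j') * (p.2.2 j * p.2.2 j'))) P :=
    fun j j' => (integrable_pi_eval_mul hv j j').mul_prod
      ((integrable_pi_eval_mul hv j j').mul_prod (integrable_pi_eval_mul hv j j'))
  have hS2 : (fun p => S p ^ 2)
      = fun p : (Fin k → ℝ) × (Fin k → ℝ) × (Fin k → ℝ) =>
          ∑ j, ∑ j', (p.1 j * p.1 j') * ((p.2.1 j * p.2.1 j') * (p.2.2 j * p.2.2 j')) := by
    funext p; rw [hS]
    simp only
    rw [sq, Finset.sum_mul_sum]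
    exact Finset.sum_congr rfl fun j _ => Finset.sum_congr rfl fun j' _ => by ring
  have hIS2 : Integrable (fun p => S p ^ 2) P := by
    rw [hS2]
    exact integrable_finset_sum _ fun j _ => integrable_finset_sum _ fun j' _ => hTint j j'
  have hMem : MemLp S 2 P :=
    (memLp_two_iff_integrable_sq hSmeas.aestronglyMeasurable).mpr hIS2
  have hT : ∀ j j' : Fin k,
      (∫ p, (p.1 j * p.1 j') * ((p.2.1 j * p.2.1 j') * (p.2.2 j * p.2.2 j')) ∂P)
        = if j = j' then (v:ℝ) * ((v:ℝ) * (v:ℝ)) else 0 := by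
    intro j j'
    have h1 : ∫ p, (p.1 j * p.1 j') * ((p.2.1 j * p.2.1 j') * (p.2.2 j * p.2.2 j')) ∂P
        = (∫ x : Fin k → ℝ, x j * x j' ∂ν)
          * ∫ q : (Fin k → ℝ) × (Fin k → ℝ), (q.1 j * q.1 j') * (q.2 j * q.2 j') ∂(ν.prod ν) :=
      integral_prod_mul (f := fun x : Fin k → ℝ => x j * x j')
        (g := fun q : (Fin k → ℝ) × (Fin k → ℝ) => (q.1 j * q.1 j') * (q.2 j * q.2 j'))
    have h2 : ∫ q : (Fin k → ℝ) × (Fin k → ℝ), (q.1 j * q.1 j') * (q.2 j * q.2 j') ∂(ν.prod ν)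
        = (∫ x : Fin k → ℝ, x j * x j' ∂ν) * ∫ x : Fin k → ℝ, x j * x j' ∂ν :=
      integral_prod_mul (f := fun x : Fin k → ℝ => x j * x j')
        (g := fun x : Fin k → ℝ => x j * x j')
    rw [h1, h2, integral_pi_eval_mul hv j j']
    by_cases h : j = j' <;> simp [h]
  have hES2 : ∫ p, S p ^ 2 ∂P = k * ((v:ℝ) * ((v:ℝ) * (v:ℝ))) := by
    rw [hS2, integral_finset_sum _
      (fun j _ => integrable_finset_sum _ fun j' _ => hTint j j')]
    have : ∀ j : Fin k,
        (∫ p, ∑ j', (p.1 j * p.1 j') * ((p.2.1 j * p.2.1 j') * (p.2.2 j * p.2.2 j')) ∂P)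
          = (v:ℝ) * ((v:ℝ) * (v:ℝ)) := by
      intro j
      rw [integral_finset_sum _ (fun j' _ => hTint j j')]
      rw [Finset.sum_congr rfl (fun j' _ => hT j j')]
      simp
    rw [Finset.sum_congr rfl (fun j _ => this j)]
    simp [mul_assoc]
  have hVar : variance S P = k * ((v:ℝ) * ((v:ℝ) * (v:ℝ))) := by
    rw [variance_eq_sub hMem]
    have h0 : P[S ^ 2] = ∫ p, S p ^ 2 ∂P := by
      simp only [Pi.pow_apply]
    rw [h0, hES2, hES]
    norm_num
  have hch := meas_ge_le_variance_div_sq (μ := P) hMem hc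
  rw [hVar, hES] at hch
  simpa using hch


end TripleHadamardAux

open TripleHadamardAux


/-- For three independent Gaussian vectors in ℝ^k with covariance (1/d)I,
with probability 1 − o(1) as k → ∞,
|⟨n⁽ⁱ⁾, n⁽ⁱ¹⁾ * n⁽ⁱ²⁾⟩| ≤ O(√k · log k / d^{3/2}). -/
theorem triple_hadamard_inner_whp (dd : ℕ → ℕ) (hdd : ∀ k, 1 ≤ dd k) :
    ∃ C : ℝ, 0 < C ∧
      Tendsto (fun k : ℕ =>
          (((Measure.pi fun _ : Fin k => gaussianReal 0 (dd k : ℝ≥0)⁻¹)).prod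
            (((Measure.pi fun _ : Fin k => gaussianReal 0 (dd k : ℝ≥0)⁻¹)).prod
              ((Measure.pi fun _ : Fin k => gaussianReal 0 (dd k : ℝ≥0)⁻¹))))
            {p : (Fin k → ℝ) × (Fin k → ℝ) × (Fin k → ℝ) |
              |∑ j, p.1 j * p.2.1 j * p.2.2 j|
                ≤ C * Real.sqrt k * Real.log k / (dd k : ℝ) ^ ((3 : ℝ) / 2)})
        atTop (nhds 1) := by
  classical
  refine ⟨1, one_pos, ?_⟩
  have hofReal : Tendsto (fun k : ℕ => ENNReal.ofReal ((Real.log k ^ 2)⁻¹))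
      atTop (nhds 0) := by
    have hlog2 : Tendsto (fun k : ℕ => (Real.log k ^ 2)⁻¹) atTop (nhds 0) :=
      ((tendsto_pow_atTop two_ne_zero).comp
        (Real.tendsto_log_atTop.comp tendsto_natCast_atTop_atTop)).inv_tendsto_atTop
    have := (ENNReal.continuous_ofReal.tendsto 0).comp hlog2
    simpa [Function.comp_def] using this
  have hg : Tendsto (fun k : ℕ => 1 - ENNReal.ofReal ((Real.log k ^ 2)⁻¹))
      atTop (nhds 1) := by
    have := ((ENNReal.continuous_sub_left ENNReal.one_ne_top).tendsto 0).comp hofReal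
    simpa [Function.comp_def] using this
  refine tendsto_of_tendsto_of_tendsto_of_le_of_le' hg tendsto_const_nhds ?_
    (Filter.Eventually.of_forall fun k => prob_le_one)
  filter_upwards [eventually_ge_atTop 3] with k hk
  -- setup
  set d : ℕ := dd k with hd
  have hd1 : 1 ≤ d := hdd k
  have hd0 : (0:ℝ) < d := by exact_mod_cast Nat.lt_of_lt_of_le Nat.zero_lt_one hd1
  have hvne : ((d : ℝ≥0))⁻¹ ≠ 0 := by
    refine inv_ne_zero ?_
    exact_mod_cast Nat.one_le_iff_ne_zero.mp hd1
  have hkpos : (0:ℝ) < k := by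
    have : (3:ℝ) ≤ k := by exact_mod_cast hk
    linarith
  have hlog : 1 ≤ Real.log k := by
    rw [Real.le_log_iff_exp_le hkpos]
    have h9 := Real.exp_one_lt_d9
    have : (3:ℝ) ≤ k := by exact_mod_cast hk
    linarith
  set c : ℝ := 1 * Real.sqrt k * Real.log k / (d:ℝ) ^ ((3:ℝ)/2) with hc
  have hcpos : 0 < c := by
    rw [hc]
    refine div_pos ?_ (Real.rpow_pos_of_pos hd0 _)
    have := Real.sqrt_pos.mpr hkpos
    nlinarith
  have hmb := main_bound hvne (k := k) (c := c) hcpos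
  have hD2 : ((d:ℝ) ^ ((3:ℝ)/2)) ^ 2 = (d:ℝ) ^ (3:ℕ) := by
    rw [← Real.rpow_natCast ((d:ℝ) ^ ((3:ℝ)/2)) 2, ← Real.rpow_mul hd0.le]
    norm_num
  have hc2 : c ^ 2 = (k:ℝ) * Real.log k ^ 2 / (d:ℝ) ^ (3:ℕ) := by
    rw [hc, div_pow, hD2, mul_pow, mul_pow, one_pow,
      Real.sq_sqrt hkpos.le, one_mul]
  have harg : ((k:ℝ) * (((((d:ℝ≥0))⁻¹ : ℝ≥0) : ℝ) * (((((d:ℝ≥0))⁻¹ : ℝ≥0) : ℝ) *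
      ((((d:ℝ≥0))⁻¹ : ℝ≥0) : ℝ)))) / c ^ 2 = (Real.log k ^ 2)⁻¹ := by
    rw [hc2]
    have hco : ((((d:ℝ≥0))⁻¹ : ℝ≥0):ℝ) = ((d:ℝ))⁻¹ := by
      push_cast
      simp
    rw [hco]
    have hlogne : Real.log k ≠ 0 := by linarith
    field_simp
  rw [harg] at hmb
  -- complement argument
  set ν : Measure (Fin k → ℝ) := Measure.pi fun _ : Fin k => gaussianReal 0 (d : ℝ≥0)⁻¹ with hν
  set P : Measure ((Fin k → ℝ) × (Fin k → ℝ) × (Fin k → ℝ)) := ν.prod (ν.prod ν) with hP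
  have hSmeas : Measurable (fun p : (Fin k → ℝ) × (Fin k → ℝ) × (Fin k → ℝ) =>
      ∑ j, p.1 j * p.2.1 j * p.2.2 j) := by
    refine Finset.measurable_sum _ fun j _ => ?_
    fun_prop
  set A : Set ((Fin k → ℝ) × (Fin k → ℝ) × (Fin k → ℝ)) :=
    {p | |∑ j, p.1 j * p.2.1 j * p.2.2 j| ≤ c} with hA
  have hAmeas : MeasurableSet A := measurableSet_le hSmeas.abs measurable_const
  have hsub : Aᶜ ⊆ {p : (Fin k → ℝ) × (Fin k → ℝ) × (Fin k → ℝ) |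
      c ≤ |∑ j, p.1 j * p.2.1 j * p.2.2 j|} := by
    intro p hp
    have hp' : ¬ |∑ j, p.1 j * p.2.1 j * p.2.2 j| ≤ c := hp
    exact (not_le.mp hp').le
  have h6 : P Aᶜ ≤ ENNReal.ofReal ((Real.log k ^ 2)⁻¹) :=
    le_trans (measure_mono hsub) hmb
  have h8 : P Aᶜ = 1 - P A := by
    rw [measure_compl hAmeas (measure_ne_top _ _), measure_univ]
  calc 1 - ENNReal.ofReal ((Real.log k ^ 2)⁻¹) ≤ 1 - P Aᶜ := tsub_le_tsub_left h6 1
    _ = P A := by rw [h8, ENNReal.sub_sub_cancel ENNReal.one_ne_top prob_le_one]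
end
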